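/- Let G be a 2-edge-connected graph without cut vertices and without non-isolating 2-vertex cuts, {u,v,w} a large 3-vertex cut of G, and (V1, V2) a partition of V(G) ∖ {u,v,w} with 7 ≤ |V1| ≤ |V2| and no edges of G between V1 and V2. Let G_1 = G[V1 ∪ {u,v,w}], G_2 = G[V2 ∪ {u,v,w}] minus the edges uv, vw, uw, and let G'_i be obtained from G_i by contracting {u,v,w} into a single vertex, for i ∈ {1,2}. If H'_1 and H'_2 are 2-edge-connected spanning subgraphs of G'_1 and G'_2, respectively, then there exists an edge set F' ⊆ E(G) with |F'| ≤ 4 such that H'_1 ∪ H'_2 ∪ F' (interpreting the edges of H'_i as the corresponding edges of G after decontracting {u,v,w}) is a 2-edge-connected spanning subgraph of G. -/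

import Mathlib

open SimpleGraph

open scoped Classical

namespace ECSS

/-! ### Generic graph notions -/

section Generic

variable {W : Type*}

/-- The number of connected components of a graph. -/
noncomputable def numComponents (Γ : SimpleGraph W) : ℕ :=
  Nat.card Γ.ConnectedComponent

/-- Deleting the vertex set `S` increases the number of connected components. -/
def IsCutSet (Γ : SimpleGraph W) (S : Set W) : Prop :=
  numComponents Γ < numComponents (Γ.induce Sᶜ)

/-- A `k`-vertex cut: a set of `k` vertices whose deletion increases the number of
connected components. -/
def IsVertexCut (Γ : SimpleGraph W) (S : Set W) (k : ℕ) : Prop :=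
  S.ncard = k ∧ IsCutSet Γ S

/-- 2-vertex-connected: connected and with no cut vertex. -/
def TwoVertexConnected (Γ : SimpleGraph W) : Prop :=
  Γ.Connected ∧ ∀ v : W, ¬ IsCutSet Γ {v}

/-- 2-edge-connected: connected, and still connected after deleting any single edge. -/
def IsTwoEdgeConnected (Γ : SimpleGraph W) : Prop :=
  Γ.Connected ∧ ∀ e ∈ Γ.edgeSet, (Γ.deleteEdges {e}).Connected

/-- A small 3-vertex cut: deleting it leaves exactly two connected components,
one of which has at most 6 vertices. -/
def IsSmall3Cut (Γ : SimpleGraph W) (S : Set W) : Prop :=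
  IsVertexCut Γ S 3 ∧ numComponents (Γ.induce Sᶜ) = 2 ∧
    ∃ c : (Γ.induce Sᶜ).ConnectedComponent, c.supp.ncard ≤ 6

/-- A large 3-vertex cut: a 3-vertex cut that is not small. -/
def IsLarge3Cut (Γ : SimpleGraph W) (S : Set W) : Prop :=
  IsVertexCut Γ S 3 ∧ ¬ IsSmall3Cut Γ S

/-- An isolating 2-vertex cut: deleting it leaves exactly two connected components,
one of which has size 1. -/
def IsIsolating2Cut (Γ : SimpleGraph W) (S : Set W) : Prop :=
  IsVertexCut Γ S 2 ∧ numComponents (Γ.induce Sᶜ) = 2 ∧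
    ∃ c : (Γ.induce Sᶜ).ConnectedComponent, c.supp.ncard = 1

/-- A non-isolating 2-vertex cut: a 2-vertex cut that is not isolating. -/
def IsNonIsolating2Cut (Γ : SimpleGraph W) (S : Set W) : Prop :=
  IsVertexCut Γ S 2 ∧ ¬ IsIsolating2Cut Γ S

/-- An irrelevant edge `xy`: an edge such that `{x, y}` is a 2-vertex cut. -/
def IsIrrelevantEdge (Γ : SimpleGraph W) (x y : W) : Prop :=
  Γ.Adj x y ∧ IsVertexCut Γ {x, y} 2

/-- A matching of size `k` between `V1` and `V2`: `k` pairwise vertex-disjoint edges,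
each with one endpoint in `V1` and the other in `V2`. -/
def HasMatchingBetween (Γ : SimpleGraph W) (V1 V2 : Set W) (k : ℕ) : Prop :=
  ∃ f g : Fin k → W,
    (∀ i, f i ∈ V1 ∧ g i ∈ V2 ∧ Γ.Adj (f i) (g i)) ∧
    ∀ i j, i ≠ j → f i ≠ f j ∧ g i ≠ g j ∧ f i ≠ g j ∧ g i ≠ f j

/-- A non-trivial segment: a maximal 2-node-connected (induced) subgraph with at
least 3 nodes. -/
def IsNontrivialSegment (Γ : SimpleGraph W) (S : Set W) : Prop :=
  3 ≤ S.ncard ∧ TwoVertexConnected (Γ.induce S) ∧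
    ∀ S' : Set W, S ⊆ S' → TwoVertexConnected (Γ.induce S') → S' = S

/-- A trivial segment: a node that is not contained in any non-trivial segment. -/
def IsTrivialSegment (Γ : SimpleGraph W) (A : W) : Prop :=
  ∀ S : Set W, IsNontrivialSegment Γ S → A ∉ S

/-- A pendant node: a node adjacent to exactly one other node. -/
def IsPendantNode (Γ : SimpleGraph W) (A : W) : Prop :=
  (Γ.neighborSet A).ncard = 1

/-- The graph `Γ` is a path from `P` to `Q` (of length at least 1):
there is a path walk from `P` to `Q` visiting every vertex and using every edge. -/
def IsPathGraphWithEnds (Γ : SimpleGraph W) (P Q : W) : Prop :=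
  ∃ p : Γ.Walk P Q, p.IsPath ∧ 1 ≤ p.length ∧ (∀ n : W, n ∈ p.support) ∧
    ∀ e ∈ Γ.edgeSet, e ∈ p.edges

end Generic

/-! ### Subgraph notions -/

variable {V : Type*}

/-- A subgraph is 2-edge-connected: connected and still connected after deleting any
single edge. -/
def SubTwoEC {G : SimpleGraph V} (K : G.Subgraph) : Prop :=
  K.Connected ∧ ∀ e ∈ K.edgeSet, (K.deleteEdges {e}).Connected

/-- A 2-edge-connected spanning subgraph (2-ECSS) of `G`. -/
def IsTwoECSS (G : SimpleGraph V) (H : G.Subgraph) : Prop :=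
  H.IsSpanning ∧ SubTwoEC H

/-- The minimum number of edges of a 2-ECSS of `G`. -/
noncomputable def opt (G : SimpleGraph V) : ℕ :=
  sInf {n : ℕ | ∃ H : G.Subgraph, IsTwoECSS G H ∧ H.edgeSet.ncard = n}

/-- `C` is a (maximal) connected component of `H`. -/
def IsComponent {G : SimpleGraph V} (H C : G.Subgraph) : Prop :=
  C ≤ H ∧ C.Connected ∧ ∀ C' : G.Subgraph, C ≤ C' → C' ≤ H → C'.Connected → C' = C

/-- `B` is a block of `C`: a maximal 2-edge-connected subgraph. -/
def IsBlock {G : SimpleGraph V} (C B : G.Subgraph) : Prop :=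
  B ≤ C ∧ SubTwoEC B ∧ ∀ B' : G.Subgraph, B ≤ B' → B' ≤ C → SubTwoEC B' → B' = B

/-- `e` is a bridge of the subgraph `C`: deleting it disconnects its endpoints. -/
def IsBridgeIn {G : SimpleGraph V} (C : G.Subgraph) (e : Sym2 V) : Prop :=
  e ∈ C.edgeSet ∧
    ∀ a b : V, s(a, b) = e → ¬ (C.deleteEdges {e}).spanningCoe.Reachable a b

/-- The subgraph contains a bridge ("complex" when it is a component). -/
def HasBridge {G : SimpleGraph V} (C : G.Subgraph) : Prop :=
  ∃ e, IsBridgeIn C e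

/-- The subgraph has no bridges. -/
def Bridgeless {G : SimpleGraph V} (H : G.Subgraph) : Prop :=
  ∀ e : Sym2 V, ¬ IsBridgeIn H e

/-- The subgraph `C` is a cycle on `i` vertices (connected and 2-regular). -/
def IsCycleOn {G : SimpleGraph V} (C : G.Subgraph) (i : ℕ) : Prop :=
  C.Connected ∧ C.verts.ncard = i ∧ ∀ v ∈ C.verts, (C.neighborSet v).ncard = 2

/-- A block `B` of a component `C` is pendant if `C` minus the vertices of `B`
is connected. -/
def IsPendant {G : SimpleGraph V} (C B : G.Subgraph) : Prop :=
  (C.deleteVerts B.verts).Connected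

/-- A 2-edge cover: a spanning subgraph in which every vertex has degree at least 2. -/
def IsTwoEdgeCover {G : SimpleGraph V} (H : G.Subgraph) : Prop :=
  H.IsSpanning ∧ ∀ v : V, 2 ≤ (H.neighborSet v).ncard

/-- A 2-edge cover is triangle-free if no component is a triangle. -/
def IsTriangleFree {G : SimpleGraph V} (H : G.Subgraph) : Prop :=
  ∀ C : G.Subgraph, IsComponent H C → ¬ IsCycleOn C 3

/-- A canonical 2-edge cover: every non-complex component is a cycle on `i` vertices
for some `4 ≤ i ≤ 7` or has at least 8 edges, and in every complex component each
pendant block has at least 6 edges and each non-pendant block has at least 4 edges. -/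
def IsCanonical {G : SimpleGraph V} (H : G.Subgraph) : Prop :=
  (∀ C : G.Subgraph, IsComponent H C → ¬ HasBridge C →
      (∃ i, 4 ≤ i ∧ i ≤ 7 ∧ IsCycleOn C i) ∨ 8 ≤ C.edgeSet.ncard) ∧
  (∀ C : G.Subgraph, IsComponent H C → HasBridge C → ∀ B : G.Subgraph, IsBlock C B →
      (IsPendant C B → 6 ≤ B.edgeSet.ncard) ∧ (¬ IsPendant C B → 4 ≤ B.edgeSet.ncard))

/-- Credit of a single component: a complex component gets its component credit 1,
plus 1 for each block, plus 1/4 for each bridge; a 2EC component with at least 8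
edges gets 2; a 2EC component that is a cycle `C_i` gets `i/4` (its number of edges
over 4). -/
noncomputable def componentCredit {G : SimpleGraph V} (C : G.Subgraph) : ℚ :=
  if HasBridge C then
    1 + ({B : G.Subgraph | IsBlock C B}.ncard : ℚ)
      + ({e : Sym2 V | IsBridgeIn C e}.ncard : ℚ) / 4
  else if 8 ≤ C.edgeSet.ncard then 2
  else (C.edgeSet.ncard : ℚ) / 4

/-- Total credit of a 2-edge cover: sum of the credits of its components. -/
noncomputable def credit {G : SimpleGraph V} (H : G.Subgraph) : ℚ :=
  ∑ᶠ C ∈ {C : G.Subgraph | IsComponent H C}, componentCredit C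

/-- Cost of a 2-edge cover: number of edges plus total credit. -/
noncomputable def cost {G : SimpleGraph V} (H : G.Subgraph) : ℚ :=
  (H.edgeSet.ncard : ℚ) + credit H

/-- An `α`-contractible subgraph: a 2-edge-connected subgraph `C` (with at least one
edge) such that every 2-ECSS of `G` contains at least `|E(C)|/α` edges with both
endpoints in `V(C)`. -/
def IsContractible (α : ℚ) (G : SimpleGraph V) (C : G.Subgraph) : Prop :=
  SubTwoEC C ∧ ∀ H : G.Subgraph, IsTwoECSS G H →
    (C.edgeSet.ncard : ℚ) / α ≤ ({e ∈ H.edgeSet | ∀ x ∈ e, x ∈ C.verts}.ncard : ℚ)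

/-- An `(α, ε)`-structured graph: simple (automatic), 2-vertex-connected, with at
least `4/ε` vertices, and containing no `α`-contractible subgraph with at most `2/ε`
edges, no irrelevant edge, no non-isolating 2-vertex cut, and no large 3-vertex cut. -/
def IsStructured (α ε : ℚ) (G : SimpleGraph V) : Prop :=
  TwoVertexConnected G ∧ (4 / ε ≤ (Nat.card V : ℚ)) ∧
  (∀ C : G.Subgraph, C.edgeSet.Nonempty → (C.edgeSet.ncard : ℚ) ≤ 2 / ε →
      ¬ IsContractible α G C) ∧
  (∀ x y : V, ¬ IsIrrelevantEdge G x y) ∧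
  (∀ S : Set V, ¬ IsNonIsolating2Cut G S) ∧
  (∀ S : Set V, ¬ IsLarge3Cut G S)

/-! ### The component graph -/

/-- The component graph `Ĝ_H`: nodes are the components of `H`, two nodes being
adjacent if some edge of `G` joins the corresponding components (self-loops are
discarded). -/
def compGraph {G : SimpleGraph V} (H : G.Subgraph) :
    SimpleGraph {C : G.Subgraph // IsComponent H C} where
  Adj A B := A ≠ B ∧ ∃ a b : V, a ∈ A.1.verts ∧ b ∈ B.1.verts ∧ G.Adj a b
  symm := by
    constructor
    rintro A B ⟨hne, a, b, ha, hb, hab⟩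
    exact ⟨hne.symm, b, a, hb, ha, hab.symm⟩
  loopless := by
    constructor
    rintro A ⟨hne, -⟩
    exact hne rfl

/-- A cycle in the component graph `Ĝ_H` (as a multigraph), given by pairwise
distinct components `D i` and pairwise distinct edges of `G`, the `i`-th edge
joining a vertex `a i` of `D i` to a vertex `b i` of `D (i+1)`. -/
def IsCompCycle {G : SimpleGraph V} (H : G.Subgraph) {m : ℕ}
    (D : Fin (m + 2) → G.Subgraph) (a b : Fin (m + 2) → V) : Prop :=
  Function.Injective D ∧ (∀ i, IsComponent H (D i)) ∧
  (∀ i, a i ∈ (D i).verts ∧ b i ∈ (D (i + 1)).verts ∧ G.Adj (a i) (b i)) ∧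
  Function.Injective fun i => s(a i, b i)

/-! ### Contracting the 2-edge-connected components: solution types -/

/-- `x` and `y` lie in the same 2-edge-connected component of `K`: they are
reachable, and remain reachable after the deletion of any single edge. -/
def SameTwoEC {G : SimpleGraph V} (K : G.Subgraph) (x y : V) : Prop :=
  K.spanningCoe.Reachable x y ∧
    ∀ e ∈ K.edgeSet, (K.deleteEdges {e}).spanningCoe.Reachable x y

/-- The setoid on the vertices of `K` identifying vertices in the same
2-edge-connected component. -/
def twoECSetoid {G : SimpleGraph V} (K : G.Subgraph) : Setoid K.verts where
  r x y := SameTwoEC K x.1 y.1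
  iseqv := by
    constructor
    · exact fun x => ⟨Reachable.refl _, fun e _ => Reachable.refl _⟩
    · exact fun h => ⟨h.1.symm, fun e he => (h.2 e he).symm⟩
    · exact fun h h' => ⟨h.1.trans h'.1, fun e he => (h.2 e he).trans (h'.2 e he)⟩

/-- The super-nodes: 2-edge-connected components of `K`, as a quotient. -/
def SNode {G : SimpleGraph V} (K : G.Subgraph) :=
  Quotient (twoECSetoid K)

/-- The graph obtained from `K` by contracting each 2-edge-connected component into
a single super-node. -/
def contractTwoEC {G : SimpleGraph V} (K : G.Subgraph) : SimpleGraph (SNode K) where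
  Adj P Q := P ≠ Q ∧ ∃ x y : K.verts,
    Quotient.mk (twoECSetoid K) x = P ∧ Quotient.mk (twoECSetoid K) y = Q ∧ K.Adj x.1 y.1
  symm := by
    constructor
    rintro P Q ⟨hne, x, y, hx, hy, hxy⟩
    exact ⟨hne.symm, y, x, hy, hx, hxy.symm⟩
  loopless := by
    constructor
    rintro P ⟨hne, -⟩
    exact hne rfl

/-- The super-node containing a vertex. -/
def cls {G : SimpleGraph V} (K : G.Subgraph) (x : K.verts) : SNode K :=
  Quotient.mk (twoECSetoid K) x

/-- Type A: the contraction is a single super-node. -/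
def TypeA {G : SimpleGraph V} (K : G.Subgraph) (u v w : K.verts) : Prop :=
  ∀ n : SNode K, n = cls K u

/-- Type B1: the contraction is a path `C₁ - ⋯ - C_k` of length at least 1 with
`u, v, w ∈ C₁ ∪ C_k` and at most two of `u, v, w` in each of `C₁` and `C_k`. -/
def TypeB1 {G : SimpleGraph V} (K : G.Subgraph) (u v w : K.verts) : Prop :=
  ∃ P Q : SNode K, IsPathGraphWithEnds (contractTwoEC K) P Q ∧
    (cls K u = P ∨ cls K u = Q) ∧ (cls K v = P ∨ cls K v = Q) ∧
    (cls K w = P ∨ cls K w = Q) ∧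
    ¬ (cls K u = P ∧ cls K v = P ∧ cls K w = P) ∧
    ¬ (cls K u = Q ∧ cls K v = Q ∧ cls K w = Q)

/-- Type B2: the contraction consists of two isolated super-nodes, each containing
at most two of `u, v, w`. -/
def TypeB2 {G : SimpleGraph V} (K : G.Subgraph) (u v w : K.verts) : Prop :=
  ∃ P Q : SNode K, P ≠ Q ∧ (∀ n : SNode K, n = P ∨ n = Q) ∧
    (∀ P' Q' : SNode K, ¬ (contractTwoEC K).Adj P' Q') ∧
    ¬ (cls K u = cls K v ∧ cls K v = cls K w)

/-- Type C1: the contraction is a tree and `u, v, w` lie in three distinct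
super-nodes. -/
def TypeC1 {G : SimpleGraph V} (K : G.Subgraph) (u v w : K.verts) : Prop :=
  (contractTwoEC K).IsTree ∧
    cls K u ≠ cls K v ∧ cls K u ≠ cls K w ∧ cls K v ≠ cls K w

/-- Type C2: the contraction is a path of length at least 1 together with one
isolated super-node, such that each of the two path ends and the isolated super-node
contains exactly one of `u, v, w`. -/
def TypeC2 {G : SimpleGraph V} (K : G.Subgraph) (u v w : K.verts) : Prop :=
  ∃ P Q R : SNode K,
    (∃ p : (contractTwoEC K).Walk P Q, p.IsPath ∧ 1 ≤ p.length ∧ R ∉ p.support ∧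
      (∀ n : SNode K, n ∈ p.support ∨ n = R) ∧
      ∀ e ∈ (contractTwoEC K).edgeSet, e ∈ p.edges) ∧
    cls K u ≠ cls K v ∧ cls K u ≠ cls K w ∧ cls K v ≠ cls K w ∧
    ({cls K u, cls K v, cls K w} : Set (SNode K)) = {P, Q, R}

/-- Type C3: the contraction consists of the three isolated super-nodes of
`u`, `v` and `w`. -/
def TypeC3 {G : SimpleGraph V} (K : G.Subgraph) (u v w : K.verts) : Prop :=
  cls K u ≠ cls K v ∧ cls K u ≠ cls K w ∧ cls K v ≠ cls K w ∧
  (∀ n : SNode K, n = cls K u ∨ n = cls K v ∨ n = cls K w) ∧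
  ∀ P Q : SNode K, ¬ (contractTwoEC K).Adj P Q

/-- `K` is of one of the six solution types with respect to `u, v, w`. -/
def OfAnyType {G : SimpleGraph V} (K : G.Subgraph) (u v w : K.verts) : Prop :=
  TypeA K u v w ∨ TypeB1 K u v w ∨ TypeB2 K u v w ∨
    TypeC1 K u v w ∨ TypeC2 K u v w ∨ TypeC3 K u v w

/-! ### Sides of a 3-vertex cut, contracted sides, and related helpers -/

/-- The induced subgraph `G[V₁ ∪ {u,v,w}]` (as a subgraph of `G`). -/
def sideOne (G : SimpleGraph V) (V1 : Set V) (u v w : V) : G.Subgraph :=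
  (⊤ : G.Subgraph).induce (V1 ∪ {u, v, w})

/-- The induced subgraph `G[V₂ ∪ {u,v,w}]` minus the edges `uv`, `vw`, `uw`. -/
def sideTwo (G : SimpleGraph V) (V2 : Set V) (u v w : V) : G.Subgraph :=
  ((⊤ : G.Subgraph).induce (V2 ∪ {u, v, w})).deleteEdges {s(u, v), s(v, w), s(u, w)}

/-- The connected component of the subgraph `K` containing the vertex `z`. -/
def compOf {G : SimpleGraph V} (K : G.Subgraph) (z : V) : G.Subgraph where
  verts := {y | y ∈ K.verts ∧ K.spanningCoe.Reachable z y}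
  Adj x y := K.Adj x y ∧ K.spanningCoe.Reachable z x
  adj_sub := fun h => K.adj_sub h.1
  edge_vert := fun h => ⟨K.edge_vert h.1, h.2⟩
  symm := by
    constructor
    rintro x y ⟨hxy, hzx⟩
    exact ⟨hxy.symm, hzx.trans (SimpleGraph.Adj.reachable (by exact hxy))⟩

/-- There is an edge of `Gi` that is not an edge of `Hi` between `A` and `B`. -/
def CrossEdge {G : SimpleGraph V} (Gi Hi : G.Subgraph) (A B : Set V) : Prop :=
  ∃ a b : V, a ∈ A ∧ b ∈ B ∧ Gi.Adj a b ∧ ¬ Hi.Adj a b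

/-- Claim (1) of the spanning-tree lemma for 3-vertex cuts. -/
def ClaimOne {G : SimpleGraph V} (Gi Hi : G.Subgraph) (x : V) : Prop :=
  compOf Hi x ≠ Hi →
    ∃ a b : V, a ∈ (compOf Hi x).verts ∧ b ∈ Hi.verts ∧ b ∉ (compOf Hi x).verts ∧
      Gi.Adj a b ∧ ¬ Hi.Adj a b

/-- Claim (2) of the spanning-tree lemma for 3-vertex cuts. -/
def ClaimTwo {G : SimpleGraph V} (Gi Hi : G.Subgraph) (u v w : V) : Prop :=
  (Disjoint (compOf Hi u).verts (compOf Hi v).verts ∧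
      Disjoint (compOf Hi v).verts (compOf Hi w).verts ∧
      Disjoint (compOf Hi u).verts (compOf Hi w).verts) →
    (CrossEdge Gi Hi (compOf Hi u).verts (compOf Hi v).verts ∧
        CrossEdge Gi Hi (compOf Hi v).verts (compOf Hi w).verts) ∨
      (CrossEdge Gi Hi (compOf Hi v).verts (compOf Hi w).verts ∧
        CrossEdge Gi Hi (compOf Hi u).verts (compOf Hi w).verts) ∨
      (CrossEdge Gi Hi (compOf Hi u).verts (compOf Hi v).verts ∧
        CrossEdge Gi Hi (compOf Hi u).verts (compOf Hi w).verts)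

/-- The condition of the gluing lemma: every edge of `Hi` is in a 2-edge-connected
component of `Hi`, or lies on an `x`-`y` path in `Hi` for distinct
`x, y ∈ {u, v, w}` such that `x` and `y` are also connected in `Hj`. -/
def EdgeCond {G : SimpleGraph V} (Hi Hj : G.Subgraph) (u v w : V) : Prop :=
  ∀ a b : V, Hi.Adj a b →
    SameTwoEC Hi a b ∨
      ∃ x ∈ ({u, v, w} : Set V), ∃ y ∈ ({u, v, w} : Set V), x ≠ y ∧
        (∃ p : Hi.spanningCoe.Walk x y, p.IsPath ∧ s(a, b) ∈ p.edges) ∧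
        Hj.spanningCoe.Reachable x y

/-- The set of all potential edges among a vertex set `S` (used to model the
contraction of `S` into a single vertex). -/
def cliqueOn (S : Set V) : Set (Sym2 V) :=
  {e | ∃ a ∈ S, ∃ b ∈ S, a ≠ b ∧ e = s(a, b)}

/-- The edge set `K` forms a 2-edge-connected spanning subgraph of the graph on `Wt`
with the set `S ⊆ Wt` contracted into a single vertex: modelled by making `S` into a
blob using `cliqueOn S` (whose edges are never deleted). -/
def ContractedTwoECSS (Wt S : Set V) (K : Set (Sym2 V)) : Prop :=
  ((SimpleGraph.fromEdgeSet (K ∪ cliqueOn S)).induce Wt).Connected ∧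
  ∀ e ∈ K, ((SimpleGraph.fromEdgeSet ((K \ {e}) ∪ cliqueOn S)).induce Wt).Connected

end ECSS

section AuxProofs

variable {V : Type*} [Fintype V] [DecidableEq V]

private lemma aux_reach_closed {K : Set (Sym2 V)} {P : V → Prop}
    (hP : ∀ a b : V, s(a, b) ∈ K → P a → P b) {a b : V}
    (h : (SimpleGraph.fromEdgeSet K).Reachable a b) (ha : P a) : P b := by
  obtain ⟨p⟩ := h
  revert ha
  induction p with
  | nil => exact id
  | cons hadj q ih =>
      intro ha
      exact ih (hP _ _ ((SimpleGraph.fromEdgeSet_adj _).mp hadj).1 ha)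

private lemma aux_induce_reach_closed {G : SimpleGraph V} {T : Set V} {P : V → Prop}
    (hP : ∀ a b : V, G.Adj a b → a ∈ T → b ∈ T → P a → P b) {a b : ↥T}
    (h : (G.induce T).Reachable a b) (ha : P a.1) : P b.1 := by
  obtain ⟨p⟩ := h
  revert ha
  induction p with
  | nil => exact id
  | @cons a c b hadj q ih =>
      intro ha
      exact ih (hP a.1 c.1 hadj a.2 c.2 ha)

private lemma aux_numComponents_eq_one {W : Type*} {Γ : SimpleGraph W}
    (h : Γ.Connected) : ECSS.numComponents Γ = 1 := by
  rw [ECSS.numComponents, Nat.card_eq_one_iff_unique]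
  obtain ⟨x0⟩ := h.nonempty
  refine ⟨⟨fun c d => ?_⟩, ⟨Γ.connectedComponentMk x0⟩⟩
  obtain ⟨x, rfl⟩ := c.exists_rep
  obtain ⟨y, rfl⟩ := d.exists_rep
  exact SimpleGraph.ConnectedComponent.eq.mpr (h.preconnected x y)

private lemma aux_two_le_numComponents {W : Type*} [Finite W] {Γ : SimpleGraph W}
    {a b : W} (h : ¬ Γ.Reachable a b) : 2 ≤ ECSS.numComponents Γ := by
  have hne : Γ.connectedComponentMk a ≠ Γ.connectedComponentMk b :=
    fun hc => h (SimpleGraph.ConnectedComponent.eq.mp hc)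
  have : Nontrivial Γ.ConnectedComponent := ⟨_, _, hne⟩
  exact Finite.one_lt_card_iff_nontrivial.mpr this

private lemma aux_isCutSet {G : SimpleGraph V} (hGc : G.Connected) {T : Set V}
    {a b : ↥(Tᶜ)} (h : ¬ (G.induce Tᶜ).Reachable a b) : ECSS.IsCutSet G T := by
  unfold ECSS.IsCutSet
  rw [aux_numComponents_eq_one hGc]
  exact lt_of_lt_of_le one_lt_two (aux_two_le_numComponents h)

/-- If a nonempty set `A0` avoiding `t` has all its neighbors inside `A0 ∪ {t}`,
and there is a vertex outside `A0 ∪ {t}`, then `t` is a cut vertex. -/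
private lemma aux_nocut1 {G : SimpleGraph V} (hGc : G.Connected)
    (hcv : ∀ x : V, ¬ ECSS.IsCutSet G {x}) (t : V) (A0 : Set V)
    (hA0 : A0.Nonempty) (htA : t ∉ A0)
    (hcl : ∀ a ∈ A0, ∀ b, G.Adj a b → b ∈ A0 ∪ {t})
    (d : V) (hd : d ∉ A0) (hdt : d ≠ t) : False := by
  obtain ⟨p, hp⟩ := hA0
  have hpT : p ∈ ({t} : Set V)ᶜ := by
    simp only [Set.mem_compl_iff, Set.mem_singleton_iff]
    rintro rfl; exact htA hp
  have hdT : d ∈ ({t} : Set V)ᶜ := by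
    simpa using hdt
  apply hcv t
  refine aux_isCutSet hGc (a := ⟨p, hpT⟩) (b := ⟨d, hdT⟩) ?_
  intro hreach
  have hdA : d ∈ A0 := by
    refine aux_induce_reach_closed (P := fun z => z ∈ A0) ?_ hreach hp
    intro x y hxy hxT hyT hxA
    rcases hcl x hxA y hxy with h' | h'
    · exact h'
    · exact absurd h' (by simpa using hyT)
  exact hd hdA

/-- If a set `A0` with at least two elements, avoiding `t1, t2`, has all its
neighbors inside `A0 ∪ {t1, t2}`, and there are two vertices outside, then
`{t1, t2}` is a non-isolating 2-cut. -/
private lemma aux_nocut2 {G : SimpleGraph V} (hGc : G.Connected)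
    (hni : ∀ S : Set V, ¬ ECSS.IsNonIsolating2Cut G S)
    {t1 t2 : V} (hne : t1 ≠ t2) (A0 : Set V)
    (ht1 : t1 ∉ A0) (ht2 : t2 ∉ A0)
    (hcl : ∀ a ∈ A0, ∀ b, G.Adj a b → b ∈ A0 ∪ {t1, t2})
    {p q : V} (hp : p ∈ A0) (hq : q ∈ A0) (hpq : p ≠ q)
    {d e : V} (hd : d ∉ A0) (he : e ∉ A0) (hde : d ≠ e)
    (hdt : d ∉ ({t1, t2} : Set V)) (het : e ∉ ({t1, t2} : Set V)) : False := by
  set T : Set V := {t1, t2} with hT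
  have hmemT : ∀ z ∈ A0, z ∈ Tᶜ := by
    intro z hz
    simp only [hT, Set.mem_compl_iff, Set.mem_insert_iff, Set.mem_singleton_iff]
    rintro (rfl | rfl)
    · exact ht1 hz
    · exact ht2 hz
  set Γ := G.induce Tᶜ with hΓ
  -- forward purity
  have hpure : ∀ {z z' : ↥(Tᶜ)}, Γ.Reachable z z' → z.1 ∈ A0 → z'.1 ∈ A0 := by
    intro z z' hr hz
    refine aux_induce_reach_closed (P := fun x => x ∈ A0) ?_ hr hz
    intro x y hxy hxT hyT hxA
    rcases hcl x hxA y hxy with h' | h'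
    · exact h'
    · exact absurd h' (by simpa using hyT)
  have hpd : p ∈ Tᶜ := hmemT p hp
  have hqd : q ∈ Tᶜ := hmemT q hq
  have hdd : d ∈ Tᶜ := hdt
  have hed : e ∈ Tᶜ := het
  have hsep : ¬ Γ.Reachable ⟨p, hpd⟩ ⟨d, hdd⟩ := fun hr => hd (hpure hr hp)
  -- {t1, t2} is a 2-vertex cut
  have hvc : ECSS.IsVertexCut G T 2 := ⟨Set.ncard_pair hne, aux_isCutSet hGc hsep⟩
  have hiso : ECSS.IsIsolating2Cut G T := by
    by_contra hiso
    exact hni T ⟨hvc, hiso⟩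
  obtain ⟨-, hnum2, c, hc1⟩ := hiso
  rw [ECSS.numComponents, Nat.card_eq_two_iff] at hnum2
  obtain ⟨c1, c2, hc12, huniv⟩ := hnum2
  have hmem2 : ∀ z : Γ.ConnectedComponent, z = c1 ∨ z = c2 := by
    intro z
    have : z ∈ ({c1, c2} : Set Γ.ConnectedComponent) := huniv ▸ Set.mem_univ _
    simpa [Set.mem_insert_iff] using this
  have hPD : Γ.connectedComponentMk ⟨p, hpd⟩ ≠ Γ.connectedComponentMk ⟨d, hdd⟩ :=
    fun hc => hsep (SimpleGraph.ConnectedComponent.eq.mp hc)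
  have hdichot : ∀ z : Γ.ConnectedComponent,
      z = Γ.connectedComponentMk ⟨p, hpd⟩ ∨ z = Γ.connectedComponentMk ⟨d, hdd⟩ := by
    intro z
    rcases hmem2 z with rfl | rfl
    · rcases hmem2 (Γ.connectedComponentMk ⟨p, hpd⟩) with h1 | h1
      · exact Or.inl h1.symm
      · rcases hmem2 (Γ.connectedComponentMk ⟨d, hdd⟩) with h2 | h2
        · exact Or.inr h2.symm
        · exact absurd (h1.trans h2.symm) hPD
    · rcases hmem2 (Γ.connectedComponentMk ⟨p, hpd⟩) with h1 | h1
      · rcases hmem2 (Γ.connectedComponentMk ⟨d, hdd⟩) with h2 | h2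
        · exact absurd (h1.trans h2.symm) hPD
        · exact Or.inr h2.symm
      · exact Or.inl h1.symm
  have hclassA : ∀ (z : ↥(Tᶜ)), z.1 ∈ A0 →
      Γ.connectedComponentMk z = Γ.connectedComponentMk ⟨p, hpd⟩ := by
    intro z hz
    rcases hdichot (Γ.connectedComponentMk z) with h' | h'
    · exact h'
    · exfalso
      have := hpure (SimpleGraph.ConnectedComponent.eq.mp h') hz
      exact hd this
  have hclassB : ∀ (z : ↥(Tᶜ)), z.1 ∉ A0 →
      Γ.connectedComponentMk z = Γ.connectedComponentMk ⟨d, hdd⟩ := by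
    intro z hz
    rcases hdichot (Γ.connectedComponentMk z) with h' | h'
    · exfalso
      exact hz (hpure (SimpleGraph.ConnectedComponent.eq.mp h').symm hp)
    · exact h'
  obtain ⟨a0, ha0⟩ := Set.ncard_eq_one.mp hc1
  rcases hdichot c with hceq | hceq
  · -- c is the component of p; it contains both p and q
    have h1 : (⟨p, hpd⟩ : ↥(Tᶜ)) ∈ c.supp := by
      rw [SimpleGraph.ConnectedComponent.mem_supp_iff, hceq]
    have h2 : (⟨q, hqd⟩ : ↥(Tᶜ)) ∈ c.supp := by
      rw [SimpleGraph.ConnectedComponent.mem_supp_iff, hceq]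
      exact hclassA ⟨q, hqd⟩ hq
    rw [ha0] at h1 h2
    apply hpq
    have heq : (⟨p, hpd⟩ : ↥(Tᶜ)) = ⟨q, hqd⟩ := by
      rw [Set.mem_singleton_iff] at h1 h2
      rw [h1, h2]
    exact congrArg Subtype.val heq
  · -- c is the component of d; it contains both d and e
    have h1 : (⟨d, hdd⟩ : ↥(Tᶜ)) ∈ c.supp := by
      rw [SimpleGraph.ConnectedComponent.mem_supp_iff, hceq]
    have h2 : (⟨e, hed⟩ : ↥(Tᶜ)) ∈ c.supp := by
      rw [SimpleGraph.ConnectedComponent.mem_supp_iff, hceq]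
      exact hclassB ⟨e, hed⟩ he
    rw [ha0] at h1 h2
    apply hde
    have heq : (⟨d, hdd⟩ : ↥(Tᶜ)) = ⟨e, hed⟩ := by
      rw [Set.mem_singleton_iff] at h1 h2
      rw [h1, h2]
    exact congrArg Subtype.val heq

/-- From a walk in the blob graph to a blob vertex, extract a plain reachability
to some blob vertex. -/
private lemma aux_walk_terminal {S Wt : Set V} {K : Set (Sym2 V)} :
    ∀ {a b : ↥Wt},
      ((SimpleGraph.fromEdgeSet (K ∪ ECSS.cliqueOn S)).induce Wt).Walk a b →
      b.1 ∈ S → ∃ s ∈ S, (SimpleGraph.fromEdgeSet K).Reachable a.1 s := by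
  intro a b p
  induction p with
  | nil => exact fun hb => ⟨_, hb, SimpleGraph.Reachable.refl _⟩
  | @cons a c b hadj q ih =>
      intro hb
      have h' : (SimpleGraph.fromEdgeSet (K ∪ ECSS.cliqueOn S)).Adj a.1 c.1 := hadj
      rw [SimpleGraph.fromEdgeSet_adj] at h'
      rcases h'.1 with hK | hT
      · obtain ⟨s, hs, hrs⟩ := ih hb
        refine ⟨s, hs, SimpleGraph.Reachable.trans ?_ hrs⟩
        exact SimpleGraph.Adj.reachable
          ((SimpleGraph.fromEdgeSet_adj _).mpr ⟨hK, h'.2⟩)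
      · obtain ⟨a', ha', b', hb', hab', heq⟩ := hT
        have haS : a.1 ∈ S := by
          rcases Sym2.eq_iff.mp heq with ⟨h1, h2⟩ | ⟨h1, h2⟩
          · exact h1 ▸ ha'
          · exact h1 ▸ hb'
        exact ⟨a.1, haS, SimpleGraph.Reachable.refl _⟩

private lemma aux_reach_terminal {S Wt : Set V} (hSW : S ⊆ Wt)
    {K : Set (Sym2 V)}
    (hconn : ((SimpleGraph.fromEdgeSet (K ∪ ECSS.cliqueOn S)).induce Wt).Connected)
    {x : V} (hx : x ∈ Wt) {s0 : V} (hs0 : s0 ∈ S) :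
    ∃ s ∈ S, (SimpleGraph.fromEdgeSet K).Reachable x s := by
  obtain ⟨p⟩ := hconn.preconnected ⟨x, hx⟩ ⟨s0, hSW hs0⟩
  exact aux_walk_terminal p hs0

private lemma aux_third {u v w x y : V} (huv : u ≠ v) (huw : u ≠ w) (hvw : v ≠ w)
    (hx : x ∈ ({u, v, w} : Set V)) (hy : y ∈ ({u, v, w} : Set V)) (hxy : x ≠ y) :
    ∃ z, z ∈ ({u, v, w} : Set V) ∧ z ≠ x ∧ z ≠ y ∧
      ({u, v, w} : Set V) = {x, y, z} := by
  simp only [Set.mem_insert_iff, Set.mem_singleton_iff] at hx hy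
  rcases hx with rfl | rfl | rfl <;> rcases hy with rfl | rfl | rfl
  · exact absurd rfl hxy
  · exact ⟨w, by simp, huw.symm, hvw.symm, rfl⟩
  · exact ⟨v, by simp, huv.symm, hvw, by ext t; simp; tauto⟩
  · exact ⟨w, by simp, hvw.symm, huw.symm, by ext t; simp; tauto⟩
  · exact absurd rfl hxy
  · exact ⟨u, by simp, huv, huw, by ext t; simp; tauto⟩
  · exact ⟨v, by simp, hvw, huv.symm, by ext t; simp; tauto⟩
  · exact ⟨u, by simp, huw, huv, by ext t; simp; tauto⟩
  · exact absurd rfl hxy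

private lemma aux_S_edge {G : SimpleGraph V} {u v w : V}
    (huv : u ≠ v) (huw : u ≠ w) (hvw : v ≠ w) {e : Sym2 V}
    (he : e ∈ G.edgeSet) (hv : ∀ x ∈ e, x ∈ ({u, v, w} : Set V)) :
    e ∈ ({s(u, v), s(v, w), s(u, w)} : Set (Sym2 V)) := by
  induction e using Sym2.ind with
  | _ a b =>
    have hadj : G.Adj a b := (SimpleGraph.mem_edgeSet G).mp he
    have hne : a ≠ b := hadj.ne
    have ha : a = u ∨ a = v ∨ a = w := by
      simpa [Set.mem_insert_iff] using hv a (by simp)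
    have hb : b = u ∨ b = v ∨ b = w := by
      simpa [Set.mem_insert_iff] using hv b (by simp)
    simp only [Set.mem_insert_iff, Set.mem_singleton_iff]
    rcases ha with rfl | rfl | rfl <;> rcases hb with rfl | rfl | rfl <;>
      simp_all [Sym2.eq_swap] <;> tauto

/-- The key edge-existence lemma: if the terminals are not all connected on one
side, then `G` provides an edge between two different reachability clusters with
at least one endpoint outside the terminals. -/
private lemma aux_lemE {G : SimpleGraph V} (hGc : G.Connected)
    (hcv : ∀ x : V, ¬ ECSS.IsCutSet G {x})
    (hni : ∀ S : Set V, ¬ ECSS.IsNonIsolating2Cut G S)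
    {u v w : V} (huv : u ≠ v) (huw : u ≠ w) (hvw : v ≠ w)
    {Vi Vj : Set V} (hpart : Vi ∪ Vj = ({u, v, w} : Set V)ᶜ)
    (hdisjij : Disjoint Vi Vj)
    (h7i : 7 ≤ Vi.ncard) (h7j : 7 ≤ Vj.ncard)
    (hnoe : ∀ a ∈ Vi, ∀ b ∈ Vj, ¬ G.Adj a b)
    {K : Set (Sym2 V)}
    (hKe : ∀ f ∈ K, ∀ x ∈ f, x ∈ Vi ∪ ({u, v, w} : Set V))
    {x y : V} (hx : x ∈ ({u, v, w} : Set V)) (hy : y ∈ ({u, v, w} : Set V))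
    (hxy : ¬ (SimpleGraph.fromEdgeSet K).Reachable x y) :
    ∃ a b : V, G.Adj a b ∧ a ∈ Vi ∪ ({u, v, w} : Set V) ∧
      b ∈ Vi ∪ ({u, v, w} : Set V) ∧ (a ∈ Vi ∨ b ∈ Vi) ∧
      ¬ (SimpleGraph.fromEdgeSet K).Reachable a b := by
  by_contra hcon
  push_neg at hcon
  set S : Set V := {u, v, w} with hSdef
  set Wi : Set V := Vi ∪ S with hWidef
  have hViS : ∀ p ∈ Vi, p ∉ S := by
    intro p hp hpS
    have : p ∈ Sᶜ := hpart ▸ Set.mem_union_left _ hp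
    exact this hpS
  have hVjS : ∀ p ∈ Vj, p ∉ S := by
    intro p hp hpS
    have : p ∈ Sᶜ := hpart ▸ Set.mem_union_right _ hp
    exact this hpS
  have hVjWi : ∀ p ∈ Vj, p ∉ Wi := by
    intro p hp hpW
    rcases hpW with h' | h'
    · exact (Set.disjoint_right.mp hdisjij hp) h'
    · exact hVjS p hp h'
  have hSWi : S ⊆ Wi := Set.subset_union_right
  -- reachability stays in Wi
  have hrW : ∀ a b : V, (SimpleGraph.fromEdgeSet K).Reachable a b → a ∈ Wi → b ∈ Wi := by
    intro a b h ha
    refine aux_reach_closed (P := fun z => z ∈ Wi) ?_ h ha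
    intro a' b' hm _
    exact hKe _ hm b' (by simp)
  -- neighbors of Vi stay in Wi
  have hVi_nbr : ∀ a ∈ Vi, ∀ b, G.Adj a b → b ∈ Wi := by
    intro a ha b hab
    by_cases hbS : b ∈ S
    · exact Set.mem_union_right _ hbS
    · have hb' : b ∈ Vi ∪ Vj := by
        rw [hpart]; exact hbS
      rcases hb' with h' | h'
      · exact Set.mem_union_left _ h'
      · exact absurd hab (hnoe a ha b h')
  set A : Set V := {p | (SimpleGraph.fromEdgeSet K).Reachable x p} with hAdef
  have hxA : x ∈ A := SimpleGraph.Reachable.refl _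
  have hAW : A ⊆ Wi := fun p hp => hrW x p hp (hSWi hx)
  have hyA : y ∉ A := hxy
  have hclA : ∀ a ∈ A, ∀ b, G.Adj a b → b ∈ Wi → (a ∈ Vi ∨ b ∈ Vi) → b ∈ A := by
    intro a ha b hab hbW hside
    exact SimpleGraph.Reachable.trans ha (hcon a b hab (hAW ha) hbW hside)
  have hxyne : x ≠ y := by rintro rfl; exact hxy (SimpleGraph.Reachable.refl _)
  obtain ⟨z, hzS, hzx, hzy, hSeq⟩ := aux_third huv huw hvw hx hy hxyne
  have hSmem : ∀ s ∈ S, s = x ∨ s = y ∨ s = z := by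
    intro s hs
    rw [hSdef, hSeq] at hs
    simpa [Set.mem_insert_iff] using hs
  have hxVi : x ∉ Vi := fun h => hViS x h hx
  have hyVi : y ∉ Vi := fun h => hViS y h hy
  have hzVi : z ∉ Vi := fun h => hViS z h hzS
  -- two distinct elements of Vj, outside everything relevant
  have hVj2 : ∃ d ∈ Vj, ∃ e ∈ Vj, d ≠ e := by
    rw [← Set.one_lt_ncard (Set.toFinite Vj)]
    omega
  obtain ⟨d0, hd0, e0, he0, hd0e0⟩ := hVj2
  have hVjA : ∀ p ∈ Vj, p ∉ A := fun p hp hpA => hVjWi p hp (hAW hpA)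
  -- two distinct elements of Vi
  have hVi2 : ∃ p ∈ Vi, ∃ q ∈ Vi, p ≠ q := by
    rw [← Set.one_lt_ncard (Set.toFinite Vi)]
    omega
  by_cases hzA : z ∈ A
  · -- terminals in A : x and z;  y ∉ A
    have hSAy : ∀ s ∈ S, s ∉ A → s = y := by
      intro s hs hsA
      rcases hSmem s hs with rfl | rfl | rfl
      · exact absurd hxA hsA
      · rfl
      · exact absurd hzA hsA
    by_cases hA' : (A ∩ Vi).Nonempty
    · by_cases h2 : ∃ p ∈ A ∩ Vi, ∃ q ∈ A ∩ Vi, p ≠ q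
      · obtain ⟨p, hp, q, hq, hpq⟩ := h2
        refine aux_nocut2 hGc hni (t1 := x) (t2 := z) (fun h => hzx h.symm)
          (A ∩ Vi) (fun h => hxVi h.2) (fun h => hzVi h.2) ?_ hp hq hpq
          (d := d0) (e := e0) (fun h => (Set.disjoint_left.mp hdisjij h.2) hd0)
          (fun h => (Set.disjoint_left.mp hdisjij h.2) he0) hd0e0 ?_ ?_
        · intro a ha b hab
          have hbW : b ∈ Wi := hVi_nbr a ha.2 b hab
          have hbA : b ∈ A := hclA a ha.1 b hab hbW (Or.inl ha.2)
          rcases hbW with hb' | hb'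
          · exact Set.mem_union_left _ ⟨hbA, hb'⟩
          · have : b = x ∨ b = y ∨ b = z := hSmem b hb'
            rcases this with rfl | rfl | rfl
            · exact Set.mem_union_right _ (by simp)
            · exact absurd hbA hyA
            · exact Set.mem_union_right _ (by simp)
        · intro h
          rcases h with h' | h'
          · exact hVjS d0 hd0 (by rw [h']; exact hx)
          · rw [Set.mem_singleton_iff] at h'
            exact hVjS d0 hd0 (by rw [h']; exact hzS)
        · intro h
          rcases h with h' | h'
          · exact hVjS e0 he0 (by rw [h']; exact hx)
          · rw [Set.mem_singleton_iff] at h'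
            exact hVjS e0 he0 (by rw [h']; exact hzS)
      · -- A ∩ Vi is a singleton {p0}
        obtain ⟨p0, hp0⟩ := hA'
        push_neg at h2
        have hsing : ∀ q ∈ A ∩ Vi, q = p0 := by
          intro q hq
          by_contra hne
          exact hne (h2 q hq p0 hp0)
        -- B' = Vi \ A is nonempty
        obtain ⟨p1, hp1, p2, hp2, hp12⟩ := hVi2
        have hB'ne : ∃ b0, b0 ∈ Vi ∧ b0 ∉ A := by
          by_cases h1 : p1 = p0
          · refine ⟨p2, hp2, fun hA2 => ?_⟩
            exact hp12 (h1 ▸ (hsing p2 ⟨hA2, hp2⟩ : p2 = p0) ▸ rfl)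
          · refine ⟨p1, hp1, fun hA1 => h1 (hsing p1 ⟨hA1, hp1⟩)⟩
        obtain ⟨b0, hb0Vi, hb0A⟩ := hB'ne
        refine aux_nocut1 hGc hcv y (Vi \ A) ⟨b0, hb0Vi, hb0A⟩
          (fun h => hyVi h.1) ?_ x (fun h => hViS x h.1 hx) hxyne
        intro a ha b hab
        have hbW : b ∈ Wi := hVi_nbr a ha.1 b hab
        have hbA : b ∉ A := by
          intro hbA
          exact ha.2 (hclA b hbA a hab.symm (Set.mem_union_left _ ha.1) (Or.inr ha.1))
        rcases hbW with hb' | hb'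
        · exact Set.mem_union_left _ ⟨hb', hbA⟩
        · exact Set.mem_union_right _ (by rw [Set.mem_singleton_iff]; exact hSAy b hb' hbA)
    · -- A ∩ Vi = ∅ ; use NOCUT1 with t = y, A0 = Vi
      obtain ⟨p1, hp1, -, -, -⟩ := hVi2
      refine aux_nocut1 hGc hcv y Vi ⟨p1, hp1⟩ hyVi ?_ x hxVi hxyne
      intro a ha b hab
      have hbW : b ∈ Wi := hVi_nbr a ha b hab
      rcases hbW with hb' | hb'
      · exact Set.mem_union_left _ hb'
      · rcases hSmem b hb' with rfl | rfl | rfl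
        · exfalso
          have : a ∈ A := hclA b hxA a hab.symm (Set.mem_union_left _ ha) (Or.inr ha)
          exact hA' ⟨a, this, ha⟩
        · exact Set.mem_union_right _ rfl
        · exfalso
          have : a ∈ A := hclA b hzA a hab.symm (Set.mem_union_left _ ha) (Or.inr ha)
          exact hA' ⟨a, this, ha⟩
  · -- z ∉ A : the only terminal in A is x
    have hSAx : ∀ s ∈ S, s ∈ A → s = x := by
      intro s hs hsA
      rcases hSmem s hs with rfl | rfl | rfl
      · rfl
      · exact absurd hsA hyA
      · exact absurd hsA hzA
    by_cases hA' : (A ∩ Vi).Nonempty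
    · -- NOCUT1 with t = x, A0 = A ∩ Vi
      refine aux_nocut1 hGc hcv x (A ∩ Vi) hA' (fun h => hxVi h.2) ?_ d0
        (fun h => (Set.disjoint_left.mp hdisjij h.2) hd0) (fun h => hVjS d0 hd0 (h ▸ hx))
      intro a ha b hab
      have hbW : b ∈ Wi := hVi_nbr a ha.2 b hab
      have hbA : b ∈ A := hclA a ha.1 b hab hbW (Or.inl ha.2)
      rcases hbW with hb' | hb'
      · exact Set.mem_union_left _ ⟨hbA, hb'⟩
      · exact Set.mem_union_right _ (by rw [Set.mem_singleton_iff]; exact hSAx b hb' hbA)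
    · -- NOCUT2 with t1 = y, t2 = z, A0 = Vi
      obtain ⟨p1, hp1, p2, hp2, hp12⟩ := hVi2
      refine aux_nocut2 hGc hni (t1 := y) (t2 := z) (fun h => hzy h.symm) Vi
        hyVi hzVi ?_ hp1 hp2 hp12 (d := x) (e := d0) hxVi
        (fun h => (Set.disjoint_left.mp hdisjij h) hd0) (fun h => hVjS d0 hd0 (h ▸ hx))
        ?_ ?_
      · intro a ha b hab
        have hbW : b ∈ Wi := hVi_nbr a ha b hab
        rcases hbW with hb' | hb'
        · exact Set.mem_union_left _ hb'
        · rcases hSmem b hb' with rfl | rfl | rfl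
          · exfalso
            have : a ∈ A := hclA b hxA a hab.symm (Set.mem_union_left _ ha) (Or.inr ha)
            exact hA' ⟨a, this, ha⟩
          · exact Set.mem_union_right _ (by simp)
          · exact Set.mem_union_right _ (by simp)
      · intro h
        rcases h with rfl | h'
        · exact hxy (SimpleGraph.Reachable.refl _)
        · rw [Set.mem_singleton_iff] at h'
          exact hzx h'.symm
      · intro h
        rcases h with rfl | h'
        · exact hVjS d0 hd0 hy
        · rw [Set.mem_singleton_iff] at h'
          exact hVjS d0 hd0 (h' ▸ hzS)

/-- The three-terminal gluing step: if some distinct pair of terminals is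
connected in `Γ1`, another pair is disconnected in `Γ1` but connected in
`Γ2 ≥ Γ1`, then all terminals are pairwise connected in `Γ2`. -/
private lemma aux_three {Γ1 Γ2 : SimpleGraph V} (hle : Γ1 ≤ Γ2)
    {u v w s1 t1 s2 t2 : V} (huv : u ≠ v) (huw : u ≠ w) (hvw : v ≠ w)
    (hs1 : s1 ∈ ({u, v, w} : Set V)) (ht1 : t1 ∈ ({u, v, w} : Set V))
    (hs2 : s2 ∈ ({u, v, w} : Set V)) (ht2 : t2 ∈ ({u, v, w} : Set V))
    (hs1t1 : s1 ≠ t1)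
    (h1 : Γ1.Reachable s1 t1) (hn2 : ¬ Γ1.Reachable s2 t2)
    (h2 : Γ2.Reachable s2 t2) :
    ∀ x ∈ ({u, v, w} : Set V), ∀ y ∈ ({u, v, w} : Set V), Γ2.Reachable x y := by
  have hs2t2 : s2 ≠ t2 := by rintro rfl; exact hn2 (SimpleGraph.Reachable.refl _)
  have hkey : ∀ p ∈ ({u, v, w} : Set V),
      Γ2.Reachable p s2 ∨ Γ2.Reachable p t2 := by
    intro p hp
    by_cases hps2 : p = s2
    · exact Or.inl (hps2 ▸ SimpleGraph.Reachable.refl _)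
    by_cases hpt2 : p = t2
    · exact Or.inr (hpt2 ▸ SimpleGraph.Reachable.refl _)
    obtain ⟨z, hzS, hzs2, hzt2, hSeq⟩ := aux_third huv huw hvw hs2 ht2 hs2t2
    have hmem : ∀ q, q ∈ ({u, v, w} : Set V) → q = s2 ∨ q = t2 ∨ q = p := by
      intro q hq
      rw [hSeq] at hq
      have hpz : p = z := by
        have hp' := hp
        rw [hSeq] at hp'
        rcases hp' with h' | h' | h'
        · exact absurd h' hps2
        · exact absurd h' hpt2
        · exact h'
      rcases hq with h' | h' | h'
      · exact Or.inl h'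
      · exact Or.inr (Or.inl h')
      · exact Or.inr (Or.inr (hpz ▸ h'))
    rcases hmem s1 hs1 with h1' | h1' | h1' <;> rcases hmem t1 ht1 with h2' | h2' | h2'
    · exact absurd (h1'.trans h2'.symm) hs1t1
    · exact absurd (h1' ▸ h2' ▸ h1) hn2
    · exact Or.inl ((h1' ▸ h2' ▸ h1 : Γ1.Reachable s2 p).mono hle).symm
    · exact absurd (h1' ▸ h2' ▸ h1 : Γ1.Reachable t2 s2).symm hn2
    · exact absurd (h1'.trans h2'.symm) hs1t1
    · exact Or.inr ((h1' ▸ h2' ▸ h1 : Γ1.Reachable t2 p).mono hle).symm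
    · exact Or.inl ((h1' ▸ h2' ▸ h1 : Γ1.Reachable p s2).mono hle)
    · exact Or.inr ((h1' ▸ h2' ▸ h1 : Γ1.Reachable p t2).mono hle)
    · exact absurd (h1'.trans h2'.symm) hs1t1
  intro x hx y hy
  rcases hkey x hx with hkx | hkx <;> rcases hkey y hy with hky | hky
  · exact hkx.trans hky.symm
  · exact hkx.trans (h2.trans hky.symm)
  · exact hkx.trans (h2.symm.trans hky.symm)
  · exact hkx.trans hky.symm

/-- One side can be augmented with at most two `G`-edges so that `u, v, w` become
pairwise connected on that side. -/
private lemma aux_connstep {G : SimpleGraph V} (hGc : G.Connected)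
    (hcv : ∀ x : V, ¬ ECSS.IsCutSet G {x})
    (hni : ∀ S : Set V, ¬ ECSS.IsNonIsolating2Cut G S)
    {u v w : V} (huv : u ≠ v) (huw : u ≠ w) (hvw : v ≠ w)
    {Vi Vj : Set V} (hpart : Vi ∪ Vj = ({u, v, w} : Set V)ᶜ)
    (hdisjij : Disjoint Vi Vj)
    (h7i : 7 ≤ Vi.ncard) (h7j : 7 ≤ Vj.ncard)
    (hnoe : ∀ a ∈ Vi, ∀ b ∈ Vj, ¬ G.Adj a b)
    {H : Set (Sym2 V)}
    (hHe : ∀ f ∈ H, ∀ x ∈ f, x ∈ Vi ∪ ({u, v, w} : Set V))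
    (hatt : ∀ p ∈ Vi ∪ ({u, v, w} : Set V), ∃ s ∈ ({u, v, w} : Set V),
      (SimpleGraph.fromEdgeSet H).Reachable s p) :
    ∃ F : Set (Sym2 V), F.ncard ≤ 2 ∧ (∀ f ∈ F, f ∈ G.edgeSet) ∧
      (∀ f ∈ F, ∀ x ∈ f, x ∈ Vi ∪ ({u, v, w} : Set V)) ∧
      (∀ f ∈ F, ∃ p, p ∈ f ∧ p ∈ Vi) ∧
      (∀ x ∈ ({u, v, w} : Set V), ∀ y ∈ ({u, v, w} : Set V),
        (SimpleGraph.fromEdgeSet (H ∪ F)).Reachable x y) := by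
  classical
  by_cases hc : ∀ x ∈ ({u, v, w} : Set V), ∀ y ∈ ({u, v, w} : Set V),
      (SimpleGraph.fromEdgeSet H).Reachable x y
  · refine ⟨∅, by simp, by simp, by simp, by simp, ?_⟩
    rw [Set.union_empty]
    exact hc
  · push_neg at hc
    obtain ⟨x1, hx1, y1, hy1, hxy1⟩ := hc
    obtain ⟨a1, b1, hab1, ha1W, hb1W, hside1, hnr1⟩ :=
      aux_lemE hGc hcv hni huv huw hvw hpart hdisjij h7i h7j hnoe hHe hx1 hy1 hxy1
    have hab1ne : a1 ≠ b1 := hab1.ne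
    set K1 : Set (Sym2 V) := H ∪ {s(a1, b1)} with hK1def
    have hK1e : ∀ f ∈ K1, ∀ x ∈ f, x ∈ Vi ∪ ({u, v, w} : Set V) := by
      intro f hf x hxf
      rcases hf with hf | hf
      · exact hHe f hf x hxf
      · rw [Set.mem_singleton_iff] at hf
        subst hf
        rcases Sym2.mem_iff.mp hxf with rfl | rfl
        · exact ha1W
        · exact hb1W
    have hmono1 : ∀ c d : V, (SimpleGraph.fromEdgeSet H).Reachable c d →
        (SimpleGraph.fromEdgeSet K1).Reachable c d := fun c d h =>
      h.mono (SimpleGraph.fromEdgeSet_mono Set.subset_union_left)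
    have hadj1 : (SimpleGraph.fromEdgeSet K1).Adj a1 b1 :=
      (SimpleGraph.fromEdgeSet_adj _).mpr ⟨Set.mem_union_right _ rfl, hab1ne⟩
    -- edge 1 basic facts
    have hf1edge : s(a1, b1) ∈ G.edgeSet := (SimpleGraph.mem_edgeSet G).mpr hab1
    have hf1mem : ∀ x ∈ s(a1, b1), x ∈ Vi ∪ ({u, v, w} : Set V) := by
      intro x hxf
      rcases Sym2.mem_iff.mp hxf with rfl | rfl
      · exact ha1W
      · exact hb1W
    have hf1Vi : ∃ p, p ∈ s(a1, b1) ∧ p ∈ Vi := by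
      rcases hside1 with h' | h'
      · exact ⟨a1, by simp, h'⟩
      · exact ⟨b1, by simp, h'⟩
    by_cases hc1 : ∀ x ∈ ({u, v, w} : Set V), ∀ y ∈ ({u, v, w} : Set V),
        (SimpleGraph.fromEdgeSet K1).Reachable x y
    · refine ⟨{s(a1, b1)}, by simp, ?_, ?_, ?_, hc1⟩
      · intro f hf
        rw [Set.mem_singleton_iff] at hf
        exact hf ▸ hf1edge
      · intro f hf
        rw [Set.mem_singleton_iff] at hf
        exact hf ▸ hf1mem
      · intro f hf
        rw [Set.mem_singleton_iff] at hf
        exact hf ▸ hf1Vi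
    · push_neg at hc1
      obtain ⟨x2, hx2, y2, hy2, hxy2⟩ := hc1
      obtain ⟨a2, b2, hab2, ha2W, hb2W, hside2, hnr2⟩ :=
        aux_lemE hGc hcv hni huv huw hvw hpart hdisjij h7i h7j hnoe hK1e hx2 hy2 hxy2
      have hab2ne : a2 ≠ b2 := hab2.ne
      set K2 : Set (Sym2 V) := H ∪ {s(a1, b1), s(a2, b2)} with hK2def
      have hsub12 : K1 ⊆ K2 := by
        intro f hf
        rcases hf with hf | hf
        · exact Set.mem_union_left _ hf
        · rw [Set.mem_singleton_iff] at hf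
          exact Set.mem_union_right _ (by simp [hf])
      have hmono2 : ∀ c d : V, (SimpleGraph.fromEdgeSet K1).Reachable c d →
          (SimpleGraph.fromEdgeSet K2).Reachable c d := fun c d h =>
        h.mono (SimpleGraph.fromEdgeSet_mono hsub12)
      have hadj2 : (SimpleGraph.fromEdgeSet K2).Adj a2 b2 :=
        (SimpleGraph.fromEdgeSet_adj _).mpr
          ⟨Set.mem_union_right _ (by simp), hab2ne⟩
      -- attachments
      obtain ⟨s1, hs1S, hs1a⟩ := hatt a1 ha1W
      obtain ⟨t1, ht1S, ht1b⟩ := hatt b1 hb1W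
      obtain ⟨s2, hs2S, hs2a⟩ := hatt a2 ha2W
      obtain ⟨t2, ht2S, ht2b⟩ := hatt b2 hb2W
      -- s1 ~ t1 in K1, but not in H
      have hn1 : ¬ (SimpleGraph.fromEdgeSet H).Reachable s1 t1 := by
        intro h'
        exact hnr1 ((hs1a.symm.trans h').trans ht1b)
      have hr1st : (SimpleGraph.fromEdgeSet K1).Reachable s1 t1 :=
        ((hmono1 _ _ hs1a).trans hadj1.reachable).trans (hmono1 _ _ ht1b).symm
      have hn2 : ¬ (SimpleGraph.fromEdgeSet K1).Reachable s2 t2 := by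
        intro h'
        exact hnr2 (((hmono1 _ _ hs2a).symm.trans h').trans (hmono1 _ _ ht2b))
      have h2st : (SimpleGraph.fromEdgeSet K2).Reachable s2 t2 :=
        ((hmono2 _ _ (hmono1 _ _ hs2a)).trans hadj2.reachable).trans
          (hmono2 _ _ (hmono1 _ _ ht2b)).symm
      have hs1t1ne : s1 ≠ t1 := by
        rintro rfl
        exact hn1 (SimpleGraph.Reachable.refl _)
      have hfinal := aux_three (SimpleGraph.fromEdgeSet_mono hsub12)
        huv huw hvw hs1S ht1S hs2S ht2S hs1t1ne hr1st hn2 h2st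
      refine ⟨{s(a1, b1), s(a2, b2)}, ?_, ?_, ?_, ?_, ?_⟩
      · exact le_trans (Set.ncard_insert_le _ _) (by simp)
      · intro f hf
        rcases hf with hf | hf
        · exact hf ▸ hf1edge
        · rw [Set.mem_singleton_iff] at hf
          exact hf ▸ (SimpleGraph.mem_edgeSet G).mpr hab2
      · intro f hf
        rcases hf with hf | hf
        · exact hf ▸ hf1mem
        · rw [Set.mem_singleton_iff] at hf
          subst hf
          intro x hxf
          rcases Sym2.mem_iff.mp hxf with rfl | rfl
          · exact ha2W
          · exact hb2W
      · intro f hf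
        rcases hf with hf | hf
        · exact hf ▸ hf1Vi
        · rw [Set.mem_singleton_iff] at hf
          subst hf
          rcases hside2 with h' | h'
          · exact ⟨a2, by simp, h'⟩
          · exact ⟨b2, by simp, h'⟩
      · exact hfinal

end AuxProofs

/-- Let `G` be 2-edge-connected, without cut vertices and without
non-isolating 2-vertex cuts, `{u,v,w}` a large 3-vertex cut, `(V1, V2)` a partition
of `V(G) ∖ {u,v,w}` with `7 ≤ |V1| ≤ |V2|` and no edges between `V1` and `V2`. If
`H'_1` and `H'_2` are (edge sets of) 2-edge-connected spanning subgraphs of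
`G'_1 = G_1|{u,v,w}` and `G'_2 = G_2|{u,v,w}`, respectively, then there is an edge
set `F' ⊆ E(G)` with `|F'| ≤ 4` such that `H'_1 ∪ H'_2 ∪ F'` is a 2-edge-connected
spanning subgraph of `G`. -/
theorem statement_17 {V : Type*} [Fintype V] [DecidableEq V] (G : SimpleGraph V)
    (hG : ECSS.IsTwoEdgeConnected G)
    (hcv : ∀ x : V, ¬ ECSS.IsCutSet G {x})
    (hni : ∀ S : Set V, ¬ ECSS.IsNonIsolating2Cut G S)
    (u v w : V) (hcut : ECSS.IsLarge3Cut G {u, v, w})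
    (V1 V2 : Set V) (hunion : V1 ∪ V2 = ({u, v, w} : Set V)ᶜ) (hdisj : Disjoint V1 V2)
    (h7 : 7 ≤ V1.ncard) (h12 : V1.ncard ≤ V2.ncard)
    (hnoedge : ∀ a ∈ V1, ∀ b ∈ V2, ¬ G.Adj a b)
    (H1 H2 : Set (Sym2 V))
    (hH1 : H1 ⊆ {e ∈ G.edgeSet | ∀ x ∈ e, x ∈ V1 ∪ {u, v, w}})
    (hH2 : H2 ⊆ {e ∈ G.edgeSet | ∀ x ∈ e, x ∈ V2 ∪ {u, v, w}}
      \ {s(u, v), s(v, w), s(u, w)})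
    (h2ec1 : ECSS.ContractedTwoECSS (V1 ∪ {u, v, w}) {u, v, w} H1)
    (h2ec2 : ECSS.ContractedTwoECSS (V2 ∪ {u, v, w}) {u, v, w} H2) :
    ∃ F : Set (Sym2 V), F ⊆ G.edgeSet ∧ F.ncard ≤ 4 ∧
      SimpleGraph.fromEdgeSet (H1 ∪ H2 ∪ F) ≤ G ∧
      ECSS.IsTwoEdgeConnected (SimpleGraph.fromEdgeSet (H1 ∪ H2 ∪ F)) := by
  classical
  obtain ⟨hGc, hGdel⟩ := hG
  -- the three terminals are pairwise distinct
  have h3 : ({u, v, w} : Set V).ncard = 3 := hcut.1.1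
  have hpairlem : ∀ a b : V, ({u, v, w} : Set V) ⊆ {a, b} →
      ({u, v, w} : Set V).ncard = 3 → False := by
    intro a b hsub h3'
    have hle2 : ({u, v, w} : Set V).ncard ≤ 2 := by
      calc ({u, v, w} : Set V).ncard ≤ ({a, b} : Set V).ncard :=
            Set.ncard_le_ncard hsub (Set.toFinite _)
        _ ≤ ({b} : Set V).ncard + 1 := Set.ncard_insert_le _ _
        _ ≤ 2 := by rw [Set.ncard_singleton]
    omega
  have huv : u ≠ v := by
    rintro rfl
    exact hpairlem u w (by intro t ht; simp at ht ⊢; tauto) h3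
  have huw : u ≠ w := by
    rintro rfl
    exact hpairlem u v (by intro t ht; simp at ht ⊢; tauto) h3
  have hvw : v ≠ w := by
    rintro rfl
    exact hpairlem u v (by intro t ht; simp at ht ⊢; tauto) h3
  have h7j : 7 ≤ V2.ncard := le_trans h7 h12
  have hnoe2 : ∀ a ∈ V2, ∀ b ∈ V1, ¬ G.Adj a b :=
    fun a ha b hb hadj => hnoedge b hb a ha hadj.symm
  have hpart2 : V2 ∪ V1 = ({u, v, w} : Set V)ᶜ := by
    rw [Set.union_comm]; exact hunion
  have hV1S : ∀ p ∈ V1, p ∉ ({u, v, w} : Set V) := by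
    intro p hp hpS
    exact (hunion ▸ Set.mem_union_left _ hp : p ∈ ({u, v, w} : Set V)ᶜ) hpS
  have hV2S : ∀ p ∈ V2, p ∉ ({u, v, w} : Set V) := by
    intro p hp hpS
    exact (hunion ▸ Set.mem_union_right _ hp : p ∈ ({u, v, w} : Set V)ᶜ) hpS
  -- edge membership facts
  have hH1e : ∀ f ∈ H1, ∀ x ∈ f, x ∈ V1 ∪ ({u, v, w} : Set V) :=
    fun f hf => (Set.mem_sep_iff.mp (hH1 hf)).2
  have hH1G : ∀ f ∈ H1, f ∈ G.edgeSet :=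
    fun f hf => (Set.mem_sep_iff.mp (hH1 hf)).1
  have hH2e : ∀ f ∈ H2, ∀ x ∈ f, x ∈ V2 ∪ ({u, v, w} : Set V) :=
    fun f hf => (Set.mem_sep_iff.mp (hH2 hf).1).2
  have hH2G : ∀ f ∈ H2, f ∈ G.edgeSet :=
    fun f hf => (Set.mem_sep_iff.mp (hH2 hf).1).1
  -- attachments to terminals on each side
  have huS : u ∈ ({u, v, w} : Set V) := by simp
  have hatt1 : ∀ p ∈ V1 ∪ ({u, v, w} : Set V), ∃ s ∈ ({u, v, w} : Set V),
      (SimpleGraph.fromEdgeSet H1).Reachable s p := by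
    intro p hp
    obtain ⟨s, hs, hr⟩ := aux_reach_terminal Set.subset_union_right h2ec1.1 hp huS
    exact ⟨s, hs, hr.symm⟩
  have hatt2 : ∀ p ∈ V2 ∪ ({u, v, w} : Set V), ∃ s ∈ ({u, v, w} : Set V),
      (SimpleGraph.fromEdgeSet H2).Reachable s p := by
    intro p hp
    obtain ⟨s, hs, hr⟩ := aux_reach_terminal Set.subset_union_right h2ec2.1 hp huS
    exact ⟨s, hs, hr.symm⟩
  -- augment each side
  obtain ⟨F1, hF1card, hF1G, hF1W, hF1Vi, hconn1⟩ :=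
    aux_connstep hGc hcv hni huv huw hvw hunion hdisj h7 h7j hnoedge hH1e hatt1
  obtain ⟨F2, hF2card, hF2G, hF2W, hF2Vi, hconn2⟩ :=
    aux_connstep hGc hcv hni huv huw hvw hpart2 hdisj.symm h7j h7 hnoe2 hH2e hatt2
  -- the two augmented sides are edge-disjoint
  have hV2W1 : ∀ p, p ∈ V2 → p ∈ V1 ∪ ({u, v, w} : Set V) → False := by
    intro p hp hw
    rcases hw with h' | h'
    · exact (Set.disjoint_left.mp hdisj h') hp
    · exact hV2S p hp h'
  have hV1W2 : ∀ p, p ∈ V1 → p ∈ V2 ∪ ({u, v, w} : Set V) → False := by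
    intro p hp hw
    rcases hw with h' | h'
    · exact (Set.disjoint_left.mp hdisj hp) h'
    · exact hV1S p hp h'
  have hdisjE : ∀ f, f ∈ H1 ∪ F1 → f ∈ H2 ∪ F2 → False := by
    intro f hf1 hf2
    rcases hf1 with hf1 | hf1 <;> rcases hf2 with hf2 | hf2
    · -- f ∈ H1 ∩ H2 : impossible, it would be a terminal-terminal edge
      have hT : f ∈ ({s(u, v), s(v, w), s(u, w)} : Set (Sym2 V)) := by
        refine aux_S_edge huv huw hvw (hH1G f hf1) ?_
        intro x hx
        have h1 := hH1e f hf1 x hx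
        have h2 := hH2e f hf2 x hx
        rcases h1 with h1 | h1
        · rcases h2 with h2 | h2
          · exact absurd h2 (Set.disjoint_left.mp hdisj h1)
          · exact h2
        · exact h1
      exact (hH2 hf2).2 hT
    · obtain ⟨p, hpf, hpV2⟩ := hF2Vi f hf2
      exact hV2W1 p hpV2 (hH1e f hf1 p hpf)
    · obtain ⟨p, hpf, hpV1⟩ := hF1Vi f hf1
      exact hV1W2 p hpV1 (hH2e f hf2 p hpf)
    · obtain ⟨p, hpf, hpV2⟩ := hF2Vi f hf2
      exact hV2W1 p hpV2 (hF1W f hf1 p hpf)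
  -- a base vertex
  obtain ⟨p0, hp0⟩ : V1.Nonempty := Set.nonempty_of_ncard_ne_zero (by omega)
  -- every vertex reaches a terminal even after one edge deletion
  have hdel : ∀ (e : Sym2 V) (x : V), ∃ s ∈ ({u, v, w} : Set V),
      (SimpleGraph.fromEdgeSet ((H1 ∪ H2 ∪ (F1 ∪ F2)) \ {e})).Reachable x s := by
    intro e x
    have hxmem : x ∈ V1 ∨ x ∈ V2 ∨ x ∈ ({u, v, w} : Set V) := by
      by_cases hxS : x ∈ ({u, v, w} : Set V)
      · exact Or.inr (Or.inr hxS)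
      · have hx' : x ∈ V1 ∪ V2 := by rw [hunion]; exact hxS
        rcases hx' with h' | h'
        · exact Or.inl h'
        · exact Or.inr (Or.inl h')
    rcases hxmem with hx | hx | hx
    · have hconn : ((SimpleGraph.fromEdgeSet ((H1 \ {e}) ∪
          ECSS.cliqueOn {u, v, w})).induce (V1 ∪ {u, v, w})).Connected := by
        by_cases he : e ∈ H1
        · exact h2ec1.2 e he
        · rw [Set.diff_singleton_eq_self he]
          exact h2ec1.1
      obtain ⟨s, hs, hr⟩ := aux_reach_terminal Set.subset_union_right hconn
        (Set.mem_union_left _ hx) huS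
      refine ⟨s, hs, hr.mono (SimpleGraph.fromEdgeSet_mono ?_)⟩
      intro f hf
      exact ⟨Set.mem_union_left _ (Set.mem_union_left _ hf.1), hf.2⟩
    · have hconn : ((SimpleGraph.fromEdgeSet ((H2 \ {e}) ∪
          ECSS.cliqueOn {u, v, w})).induce (V2 ∪ {u, v, w})).Connected := by
        by_cases he : e ∈ H2
        · exact h2ec2.2 e he
        · rw [Set.diff_singleton_eq_self he]
          exact h2ec2.1
      obtain ⟨s, hs, hr⟩ := aux_reach_terminal Set.subset_union_right hconn
        (Set.mem_union_left _ hx) huS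
      refine ⟨s, hs, hr.mono (SimpleGraph.fromEdgeSet_mono ?_)⟩
      intro f hf
      exact ⟨Set.mem_union_left _ (Set.mem_union_right _ hf.1), hf.2⟩
    · exact ⟨x, hx, SimpleGraph.Reachable.refl _⟩
  -- terminals remain pairwise connected after one edge deletion
  have hterm : ∀ (e : Sym2 V), ∀ x ∈ ({u, v, w} : Set V), ∀ y ∈ ({u, v, w} : Set V),
      (SimpleGraph.fromEdgeSet ((H1 ∪ H2 ∪ (F1 ∪ F2)) \ {e})).Reachable x y := by
    intro e x hx y hy
    by_cases he : e ∈ H2 ∪ F2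
    · have hsub : H1 ∪ F1 ⊆ (H1 ∪ H2 ∪ (F1 ∪ F2)) \ {e} := by
        intro f hf
        refine ⟨?_, ?_⟩
        · rcases hf with hf | hf
          · exact Set.mem_union_left _ (Set.mem_union_left _ hf)
          · exact Set.mem_union_right _ (Set.mem_union_left _ hf)
        · rw [Set.mem_singleton_iff]
          rintro rfl
          exact hdisjE f hf he
      exact (hconn1 x hx y hy).mono (SimpleGraph.fromEdgeSet_mono hsub)
    · have hsub : H2 ∪ F2 ⊆ (H1 ∪ H2 ∪ (F1 ∪ F2)) \ {e} := by
        intro f hf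
        refine ⟨?_, ?_⟩
        · rcases hf with hf | hf
          · exact Set.mem_union_left _ (Set.mem_union_right _ hf)
          · exact Set.mem_union_right _ (Set.mem_union_right _ hf)
        · rw [Set.mem_singleton_iff]
          rintro rfl
          exact he hf
      exact (hconn2 x hx y hy).mono (SimpleGraph.fromEdgeSet_mono hsub)
  -- connectivity after one deletion
  have hconnd : ∀ e : Sym2 V,
      (SimpleGraph.fromEdgeSet ((H1 ∪ H2 ∪ (F1 ∪ F2)) \ {e})).Connected := by
    intro e
    rw [SimpleGraph.connected_iff]
    refine ⟨?_, ⟨p0⟩⟩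
    intro x y
    obtain ⟨sx, hsx, hrx⟩ := hdel e x
    obtain ⟨sy, hsy, hry⟩ := hdel e y
    exact (hrx.trans (hterm e sx hsx sy hsy)).trans hry.symm
  refine ⟨F1 ∪ F2, ?_, ?_, ?_, ?_, ?_⟩
  · -- F ⊆ E(G)
    intro f hf
    rcases hf with hf | hf
    · exact hF1G f hf
    · exact hF2G f hf
  · -- |F| ≤ 4
    have := Set.ncard_union_le F1 F2
    omega
  · -- the union is a subgraph of G
    intro a b hab
    obtain ⟨hm, hne⟩ := (SimpleGraph.fromEdgeSet_adj _).mp hab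
    rcases hm with hm | hm
    · rcases hm with hm | hm
      · exact (SimpleGraph.mem_edgeSet G).mp (hH1G _ hm)
      · exact (SimpleGraph.mem_edgeSet G).mp (hH2G _ hm)
    · rcases hm with hm | hm
      · exact (SimpleGraph.mem_edgeSet G).mp (hF1G _ hm)
      · exact (SimpleGraph.mem_edgeSet G).mp (hF2G _ hm)
  · -- connected
    exact SimpleGraph.Connected.mono
      (SimpleGraph.fromEdgeSet_mono Set.diff_subset) (hconnd s(p0, p0))
  · -- stays connected after deleting any edge
    intro e he
    refine SimpleGraph.Connected.mono ?_ (hconnd e)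
    intro a b hab
    rw [SimpleGraph.deleteEdges_adj]
    obtain ⟨hm, hne⟩ := (SimpleGraph.fromEdgeSet_adj _).mp hab
    exact ⟨(SimpleGraph.fromEdgeSet_adj _).mpr ⟨hm.1, hne⟩, hm.2⟩
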